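/- Under the hypotheses of the previous lemma and additionally 4·a21(w) ≥ w·a21'(w) ≥ 0 and 4·a12(v) ≥ v·a12'(v) ≥ 0 for all v, w ≥ 0, define for ε > 0 the regularized matrices A_ε(u) = A(u) + ε·diag(u2, u1) and H_ε(u) = H(u) + ε·diag(1/u1, 1/u2). Then for all u ∈ (0,∞)² and z ∈ ℝ²: zᵀ H_ε(u) A_ε(u) z ≥ zᵀ H(u) A(u) z + ε·(((α10 + a11(u1))/u1)·z1² + ((α20 + a22(u2))/u2)·z2²). In particular H_ε(u)A_ε(u) is positive definite on (0,∞)². -/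

import Mathlib

set_option maxHeartbeats 1000000

lemma quad_nonneg (X Y P z1 z2 : ℝ) (hX : 0 ≤ X) (hY : 0 ≤ Y) (hXY : P^2 ≤ X*Y) :
    0 ≤ X*z1^2 + 2*P*(z1*z2) + Y*z2^2 := by
  rcases eq_or_lt_of_le hX with h | h
  · have hP : P = 0 := by nlinarith
    subst hP
    rw [← h]
    simpa using mul_nonneg hY (sq_nonneg z2)
  · nlinarith [sq_nonneg (X*z1 + P*z2), mul_nonneg (sub_nonneg.2 hXY) (sq_nonneg z2)]

lemma key (s p d a b c : ℝ) (hs : 1 ≤ s) (hp : 0 ≤ p) (hd0 : 0 ≤ d)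
    (hd : (1-1/s)*p ≤ d) (ha : 0 ≤ a) (hb : 0 ≤ b) (hc : 0 ≤ c)
    (hab : c^2*(p*d) ≤ a*b) :
    c*p ≤ c*p/s^2 + a/s + b/s + c*d := by
  have hs0 : 0 < s := lt_of_lt_of_le one_pos hs
  have h1s : 0 < 1/s := by positivity
  set x := Real.sqrt p with hx
  set y := Real.sqrt d with hy
  have hx0 : 0 ≤ x := Real.sqrt_nonneg p
  have hy0 : 0 ≤ y := Real.sqrt_nonneg d
  have hxp : x^2 = p := Real.sq_sqrt hp
  have hyd : y^2 = d := Real.sq_sqrt hd0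
  have hs1 : 0 ≤ 1 - 1/s := by
    have : 1/s ≤ 1 := by rw [div_le_one hs0]; exact hs
    linarith
  have hyx : (1-1/s)*x ≤ y := by
    rw [hy]
    rw [show (1-1/s)*x = Real.sqrt (((1-1/s)*x)^2) from
      (Real.sqrt_sq (by positivity)).symm]
    apply Real.sqrt_le_sqrt
    nlinarith [mul_nonneg (mul_nonneg hs1 h1s.le) (sq_nonneg x)]
  have hab2 : 2*(c*(x*y)) ≤ a + b := by
    have h1 : Real.sqrt (a*b) ≤ (a+b)/2 := by
      have := Real.sqrt_le_sqrt (show a*b ≤ ((a+b)/2)^2 by nlinarith [sq_nonneg (a-b)])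
      rwa [Real.sqrt_sq (by linarith : (0:ℝ) ≤ (a+b)/2)] at this
    have h2 : c*(x*y) ≤ Real.sqrt (a*b) := calc
      c*(x*y) = Real.sqrt ((c*(x*y))^2) := (Real.sqrt_sq (by positivity)).symm
      _ = Real.sqrt (c^2*(p*d)) := by rw [show (c*(x*y))^2 = c^2*(x^2*y^2) by ring, hxp, hyd]
      _ ≤ Real.sqrt (a*b) := Real.sqrt_le_sqrt hab
    linarith
  have hsy : (s-1)*x ≤ s*y := by
    have h5 := mul_le_mul_of_nonneg_left hyx hs0.le
    have hss : s*((1-1/s)*x) = (s-1)*x := by field_simp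
    linarith [hss ▸ h5]
  have hs2 : (0:ℝ) < s^2 := by positivity
  rw [← hxp, ← hyd]
  have hmain : c*x^2*s^2 ≤ c*x^2 + a*s + b*s + c*y^2*s^2 := by
    have h3 := mul_le_mul_of_nonneg_left hab2 hs0.le
    have h4 : 0 ≤ c*((x + s*y) + s*x)*((x + s*y) - s*x) := by
      apply mul_nonneg (mul_nonneg hc (by nlinarith)) (by nlinarith)
    nlinarith [h4, h3]
  have heq : c*x^2/s^2 + a/s + b/s + c*y^2 = (c*x^2 + a*s + b*s + c*y^2*s^2)/s^2 := by
    field_simp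
  rw [heq, le_div_iff₀ hs2]
  linarith

lemma HA_nonneg (s u1 u2 α10 α20 B11 B12 B21 B22 C11 C12 C21 C22 z1 z2 : ℝ)
    (hs : 1 ≤ s) (hu1 : 0 < u1) (hu2 : 0 < u2) (h10 : 0 ≤ α10) (h20 : 0 ≤ α20)
    (hB11 : 0 ≤ B11) (hB12 : 0 ≤ B12) (hB21 : 0 ≤ B21) (hB22 : 0 ≤ B22)
    (hC11 : 0 ≤ C11) (hC12 : 0 ≤ C12) (hC21 : 0 ≤ C21) (hC22 : 0 ≤ C22)
    (hs12 : u2*C12 ≤ s*B12) (hs21 : u1*C21 ≤ s*B21)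
    (hcr : (1-1/s)*C12*C21 ≤ C11*C22) :
    0 ≤ (C21/u1)*((α10+B11+B12)+u1*C11)*z1^2 + 2*(C12*C21)*(z1*z2)
        + (C12/u2)*((α20+B21+B22)+u2*C22)*z2^2 := by
  have hs0 : 0 < s := lt_of_lt_of_le one_pos hs
  have hS1 : 0 ≤ (α10+B11+B12)+u1*C11 := by
    have := mul_nonneg hu1.le hC11; linarith
  have hS2 : 0 ≤ (α20+B21+B22)+u2*C22 := by
    have := mul_nonneg hu2.le hC22; linarith
  have hX : 0 ≤ (C21/u1)*((α10+B11+B12)+u1*C11) :=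
    mul_nonneg (div_nonneg hC21 hu1.le) hS1
  have hY : 0 ≤ (C12/u2)*((α20+B21+B22)+u2*C22) :=
    mul_nonneg (div_nonneg hC12 hu2.le) hS2
  have hk := key s (C12*C21) (C11*C22) (u2^2*(C12*C22)) (u1^2*(C11*C21)) (u1*u2) hs
    (mul_nonneg hC12 hC21) (mul_nonneg hC11 hC22)
    (by calc (1-1/s)*(C12*C21) = (1-1/s)*C12*C21 := by ring
          _ ≤ C11*C22 := hcr)
    (by positivity) (by positivity) (by positivity)
    (le_of_eq (by ring))
  have e1 : (u1*u2)*(C12*C21)/s^2 ≤ B12*B21 := by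
    rw [div_le_iff₀ (by positivity)]
    have m := mul_le_mul hs12 hs21 (mul_nonneg hu1.le hC21)
      (le_trans (mul_nonneg hu2.le hC12) hs12)
    nlinarith [m]
  have e2 : (u2^2*(C12*C22))/s ≤ B12*(u2*C22) := by
    rw [div_le_iff₀ hs0]
    nlinarith [mul_le_mul_of_nonneg_right hs12 (mul_nonneg hu2.le hC22)]
  have e3 : (u1^2*(C11*C21))/s ≤ (u1*C11)*B21 := by
    rw [div_le_iff₀ hs0]
    nlinarith [mul_le_mul_of_nonneg_right hs21 (mul_nonneg hu1.le hC11)]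
  have e5 : B12*B21 + B12*(u2*C22) + (u1*C11)*B21 + (u1*C11)*(u2*C22)
      ≤ ((α10+B11+B12)+u1*C11)*(((α20+B21+B22)+u2*C22)) := by
    have t1 : 0 ≤ (α10+B11)*((α20+B21+B22)+u2*C22) := mul_nonneg (by linarith) hS2
    have t2 : 0 ≤ (B12+u1*C11)*(α20+B22) :=
      mul_nonneg (by nlinarith [mul_nonneg hu1.le hC11]) (by linarith)
    nlinarith [t1, t2]
  have hS : (u1*u2)*(C12*C21) ≤ ((α10+B11+B12)+u1*C11)*((α20+B21+B22)+u2*C22) := by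
    linarith
  have hXY : (C12*C21)^2
      ≤ ((C21/u1)*((α10+B11+B12)+u1*C11))*((C12/u2)*((α20+B21+B22)+u2*C22)) := by
    rw [show ((C21/u1)*((α10+B11+B12)+u1*C11))*((C12/u2)*((α20+B21+B22)+u2*C22))
        = ((C12*C21)*(((α10+B11+B12)+u1*C11)*((α20+B21+B22)+u2*C22)))/(u1*u2) by
      field_simp, le_div_iff₀ (by positivity)]
    nlinarith [mul_le_mul_of_nonneg_left hS (mul_nonneg hC12 hC21)]
  have := quad_nonneg _ _ (C12*C21) z1 z2 hX hY hXY
  linarith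

lemma eps_quad (u1 u2 ε C11 C12 C21 C22 B12 B21 z1 z2 : ℝ)
    (hu1 : 0 < u1) (hu2 : 0 < u2) (hε : 0 < ε)
    (hC11 : 0 ≤ C11) (hC12 : 0 ≤ C12) (hC21 : 0 ≤ C21) (hC22 : 0 ≤ C22)
    (h12 : u2*C12 ≤ 4*B12) (h21 : u1*C21 ≤ 4*B21) :
    0 ≤ u2*(u2*C21 + B12 + u1*C11 + ε*u2)*z1^2 + (u1*u2*(C12+C21))*(z1*z2)
        + u1*(u1*C12 + B21 + u2*C22 + ε*u1)*z2^2 := by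
  have hB12 : 0 ≤ B12 := by nlinarith [mul_nonneg hu2.le hC12]
  have hB21 : 0 ≤ B21 := by nlinarith [mul_nonneg hu1.le hC21]
  have hX : 0 ≤ u2*(u2*C21 + B12 + u1*C11 + ε*u2) := by
    apply mul_nonneg hu2.le
    nlinarith [mul_nonneg hu2.le hC21, mul_nonneg hu1.le hC11, mul_pos hε hu2]
  have hY : 0 ≤ u1*(u1*C12 + B21 + u2*C22 + ε*u1) := by
    apply mul_nonneg hu1.le
    nlinarith [mul_nonneg hu1.le hC12, mul_nonneg hu2.le hC22, mul_pos hε hu1]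
  have h1 : 0 ≤ 4*B12 - u2*C12 := by linarith
  have h2 : 0 ≤ 4*B21 - u1*C21 := by linarith
  have hXY : (u1*u2*(C12+C21)/2)^2
      ≤ (u2*(u2*C21 + B12 + u1*C11 + ε*u2))*(u1*(u1*C12 + B21 + u2*C22 + ε*u1)) := by
    have hX0 : u2*(u2*C21 + B12) ≤ u2*(u2*C21 + B12 + u1*C11 + ε*u2) := by
      nlinarith [mul_nonneg hu2.le (mul_nonneg hu1.le hC11), mul_nonneg hu2.le (mul_pos hε hu2).le]
    have hY0 : u1*(u1*C12 + B21) ≤ u1*(u1*C12 + B21 + u2*C22 + ε*u1) := by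
      nlinarith [mul_nonneg hu1.le (mul_nonneg hu2.le hC22), mul_nonneg hu1.le (mul_pos hε hu1).le]
    have hX0n : 0 ≤ u2*(u2*C21 + B12) := by
      apply mul_nonneg hu2.le; nlinarith [mul_nonneg hu2.le hC21]
    have hY0n : 0 ≤ u1*(u1*C12 + B21) := by
      apply mul_nonneg hu1.le; nlinarith [mul_nonneg hu1.le hC12]
    have hprod : (u2*(u2*C21 + B12))*(u1*(u1*C12 + B21))
        ≤ (u2*(u2*C21 + B12 + u1*C11 + ε*u2))*(u1*(u1*C12 + B21 + u2*C22 + ε*u1)) :=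
      mul_le_mul hX0 hY0 hY0n (le_trans hX0n hX0)
    have hcore : (u1*u2*(C12+C21)/2)^2 ≤ (u2*(u2*C21 + B12))*(u1*(u1*C12 + B21)) := by
      nlinarith [mul_nonneg (mul_nonneg h1 h2) (mul_nonneg hu1.le hu2.le),
        mul_nonneg h2 (mul_nonneg (mul_nonneg (mul_nonneg hu1.le hu2.le) hu2.le) hC21),
        mul_nonneg h2 (mul_nonneg (mul_nonneg (mul_nonneg hu1.le hu2.le) hu2.le) hC12),
        mul_nonneg h1 (mul_nonneg (mul_nonneg (mul_nonneg hu1.le hu2.le) hu1.le) hC12),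
        mul_nonneg h1 (mul_nonneg (mul_nonneg (mul_nonneg hu1.le hu2.le) hu1.le) hC21),
        mul_nonneg (mul_nonneg (mul_nonneg (mul_nonneg (mul_nonneg hu1.le hu1.le) hu2.le) hu2.le) hC12) hC21]
    linarith
  have := quad_nonneg _ _ (u1*u2*(C12+C21)/2) z1 z2 hX hY hXY
  nlinarith [this]

open Matrix

/-- Positive definiteness of the regularized product `H_ε(u) A_ε(u)` for the
population model without volume filling. -/
theorem stmt16 (s : ℝ) (hs : 1 ≤ s)
    (α10 α20 : ℝ) (h10 : 0 < α10) (h20 : 0 < α20)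
    (a11 a12 a21 a22 a11' a12' a21' a22' : ℝ → ℝ)
    (hd11 : ∀ y : ℝ, 0 ≤ y → HasDerivAt a11 (a11' y) y)
    (hd12 : ∀ y : ℝ, 0 ≤ y → HasDerivAt a12 (a12' y) y)
    (hd21 : ∀ y : ℝ, 0 ≤ y → HasDerivAt a21 (a21' y) y)
    (hd22 : ∀ y : ℝ, 0 ≤ y → HasDerivAt a22 (a22' y) y)
    (hnn11 : ∀ y : ℝ, 0 ≤ y → 0 ≤ a11 y) (hnn22 : ∀ y : ℝ, 0 ≤ y → 0 ≤ a22 y)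
    (hnn12 : ∀ y : ℝ, 0 ≤ y → 0 ≤ a12 y) (hnn21 : ∀ y : ℝ, 0 ≤ y → 0 ≤ a21 y)
    (hnn11' : ∀ y : ℝ, 0 ≤ y → 0 ≤ a11' y) (hnn22' : ∀ y : ℝ, 0 ≤ y → 0 ≤ a22' y)
    (hnn12' : ∀ y : ℝ, 0 ≤ y → 0 ≤ a12' y) (hnn21' : ∀ y : ℝ, 0 ≤ y → 0 ≤ a21' y)
    (hs12 : ∀ v : ℝ, 0 ≤ v → v * a12' v ≤ s * a12 v)
    (hs21 : ∀ w : ℝ, 0 ≤ w → w * a21' w ≤ s * a21 w)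
    (hcross : ∀ v w : ℝ, 0 ≤ v → 0 ≤ w →
      (1 - 1 / s) * a12' v * a21' w ≤ a11' w * a22' v)
    (h4a21 : ∀ w : ℝ, 0 ≤ w → w * a21' w ≤ 4 * a21 w)
    (h4a21' : ∀ w : ℝ, 0 ≤ w → 0 ≤ w * a21' w)
    (h4a12 : ∀ v : ℝ, 0 ≤ v → v * a12' v ≤ 4 * a12 v)
    (h4a12' : ∀ v : ℝ, 0 ≤ v → 0 ≤ v * a12' v)
    (ε : ℝ) (hε : 0 < ε) :
    ∀ u1 u2 : ℝ, 0 < u1 → 0 < u2 →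
      (∀ z1 z2 : ℝ,
        ![z1, z2] ⬝ᵥ
            ((!![a21' u1 / u1, 0; 0, a12' u2 / u2] *
              !![(α10 + a11 u1 + a12 u2) + u1 * a11' u1, u1 * a12' u2;
                 u2 * a21' u1, (α20 + a21 u1 + a22 u2) + u2 * a22' u2]) *ᵥ
              ![z1, z2])
          + ε * (((α10 + a11 u1) / u1) * z1 ^ 2 + ((α20 + a22 u2) / u2) * z2 ^ 2)
        ≤ ![z1, z2] ⬝ᵥ
            (((!![a21' u1 / u1, 0; 0, a12' u2 / u2] + ε • !![1 / u1, 0; 0, 1 / u2]) *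
              (!![(α10 + a11 u1 + a12 u2) + u1 * a11' u1, u1 * a12' u2;
                  u2 * a21' u1, (α20 + a21 u1 + a22 u2) + u2 * a22' u2]
                + ε • !![u2, 0; 0, u1])) *ᵥ
              ![z1, z2])) ∧
      ∀ z : Fin 2 → ℝ, z ≠ 0 →
        0 < z ⬝ᵥ
          (((!![a21' u1 / u1, 0; 0, a12' u2 / u2] + ε • !![1 / u1, 0; 0, 1 / u2]) *
            (!![(α10 + a11 u1 + a12 u2) + u1 * a11' u1, u1 * a12' u2;
                u2 * a21' u1, (α20 + a21 u1 + a22 u2) + u2 * a22' u2]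
              + ε • !![u2, 0; 0, u1])) *ᵥ z) := by
  intro u1 u2 hu1 hu2
  have h1 : u1 ≠ 0 := ne_of_gt hu1
  have h2 : u2 ≠ 0 := ne_of_gt hu2
  have hE : ∀ z1 z2 : ℝ, 0 ≤ u2*(u2*a21' u1 + a12 u2 + u1*a11' u1 + ε*u2)*z1^2
      + (u1*u2*(a12' u2 + a21' u1))*(z1*z2)
      + u1*(u1*a12' u2 + a21 u1 + u2*a22' u2 + ε*u1)*z2^2 := fun z1 z2 =>
    eps_quad u1 u2 ε (a11' u1) (a12' u2) (a21' u1) (a22' u2) (a12 u2) (a21 u1) z1 z2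
      hu1 hu2 hε (hnn11' u1 hu1.le) (hnn12' u2 hu2.le) (hnn21' u1 hu1.le) (hnn22' u2 hu2.le)
      (h4a12 u2 hu2.le) (h4a21 u1 hu1.le)
  constructor
  · intro z1 z2
    have hdiff : ![z1, z2] ⬝ᵥ
            (((!![a21' u1 / u1, 0; 0, a12' u2 / u2] + ε • !![1 / u1, 0; 0, 1 / u2]) *
              (!![(α10 + a11 u1 + a12 u2) + u1 * a11' u1, u1 * a12' u2;
                  u2 * a21' u1, (α20 + a21 u1 + a22 u2) + u2 * a22' u2]
                + ε • !![u2, 0; 0, u1])) *ᵥ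
              ![z1, z2])
        = (![z1, z2] ⬝ᵥ
            ((!![a21' u1 / u1, 0; 0, a12' u2 / u2] *
              !![(α10 + a11 u1 + a12 u2) + u1 * a11' u1, u1 * a12' u2;
                 u2 * a21' u1, (α20 + a21 u1 + a22 u2) + u2 * a22' u2]) *ᵥ
              ![z1, z2])
          + ε * (((α10 + a11 u1) / u1) * z1 ^ 2 + ((α20 + a22 u2) / u2) * z2 ^ 2))
          + (ε/(u1*u2)) * (u2*(u2*a21' u1 + a12 u2 + u1*a11' u1 + ε*u2)*z1^2
              + (u1*u2*(a12' u2 + a21' u1))*(z1*z2)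
              + u1*(u1*a12' u2 + a21 u1 + u2*a22' u2 + ε*u1)*z2^2) := by
      simp only [Matrix.mul_apply, Matrix.mulVec, dotProduct, Fin.sum_univ_two, Matrix.of_apply,
        Matrix.add_apply, Matrix.smul_apply, smul_eq_mul, Matrix.cons_val', Matrix.cons_val_zero,
        Matrix.cons_val_one, Matrix.head_cons, Matrix.empty_val', Matrix.cons_val_fin_one,
        Matrix.head_fin_const]
      field_simp
      ring
    rw [hdiff]
    have := hE z1 z2
    have hpos : 0 ≤ (ε/(u1*u2)) := by positivity
    nlinarith [mul_nonneg hpos this]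
  · intro z hz
    have hform : z ⬝ᵥ
          (((!![a21' u1 / u1, 0; 0, a12' u2 / u2] + ε • !![1 / u1, 0; 0, 1 / u2]) *
            (!![(α10 + a11 u1 + a12 u2) + u1 * a11' u1, u1 * a12' u2;
                u2 * a21' u1, (α20 + a21 u1 + a22 u2) + u2 * a22' u2]
              + ε • !![u2, 0; 0, u1])) *ᵥ z)
        = ((a21' u1/u1)*((α10 + a11 u1 + a12 u2) + u1*a11' u1)*(z 0)^2
            + 2*(a12' u2 * a21' u1)*(z 0 * z 1)
            + (a12' u2/u2)*((α20 + a21 u1 + a22 u2) + u2*a22' u2)*(z 1)^2)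
          + ε * (((α10 + a11 u1) / u1) * (z 0) ^ 2 + ((α20 + a22 u2) / u2) * (z 1) ^ 2)
          + (ε/(u1*u2)) * (u2*(u2*a21' u1 + a12 u2 + u1*a11' u1 + ε*u2)*(z 0)^2
              + (u1*u2*(a12' u2 + a21' u1))*(z 0 * z 1)
              + u1*(u1*a12' u2 + a21 u1 + u2*a22' u2 + ε*u1)*(z 1)^2) := by
      simp only [Matrix.mul_apply, Matrix.mulVec, dotProduct, Fin.sum_univ_two, Matrix.of_apply,
        Matrix.add_apply, Matrix.smul_apply, smul_eq_mul, Matrix.cons_val', Matrix.cons_val_zero,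
        Matrix.cons_val_one, Matrix.head_cons, Matrix.empty_val', Matrix.cons_val_fin_one,
        Matrix.head_fin_const]
      field_simp
      ring
    rw [hform]
    have hHA := HA_nonneg s u1 u2 α10 α20 (a11 u1) (a12 u2) (a21 u1) (a22 u2)
      (a11' u1) (a12' u2) (a21' u1) (a22' u2) (z 0) (z 1)
      hs hu1 hu2 h10.le h20.le
      (hnn11 u1 hu1.le) (hnn12 u2 hu2.le) (hnn21 u1 hu1.le) (hnn22 u2 hu2.le)
      (hnn11' u1 hu1.le) (hnn12' u2 hu2.le) (hnn21' u1 hu1.le) (hnn22' u2 hu2.le)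
      (hs12 u2 hu2.le) (hs21 u1 hu1.le) (hcross u2 u1 hu2.le hu1.le)
    have hEz := hE (z 0) (z 1)
    have hpos : 0 ≤ (ε/(u1*u2)) := by positivity
    have hzne : z 0 ≠ 0 ∨ z 1 ≠ 0 := by
      by_contra hc
      push_neg at hc
      exact hz (funext fun i => by fin_cases i <;> simp [hc.1, hc.2])
    have hc1 : 0 < (α10 + a11 u1) / u1 := div_pos (by linarith [hnn11 u1 hu1.le]) hu1
    have hc2 : 0 < (α20 + a22 u2) / u2 := div_pos (by linarith [hnn22 u2 hu2.le]) hu2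
    have hαpos : 0 < ε * (((α10 + a11 u1) / u1) * (z 0) ^ 2 + ((α20 + a22 u2) / u2) * (z 1) ^ 2) := by
      apply mul_pos hε
      rcases hzne with h | h
      · have : 0 < (z 0)^2 := by positivity
        nlinarith [mul_nonneg hc2.le (sq_nonneg (z 1)), mul_pos hc1 this]
      · have : 0 < (z 1)^2 := by positivity
        nlinarith [mul_nonneg hc1.le (sq_nonneg (z 0)), mul_pos hc2 this]
    nlinarith [mul_nonneg hpos hEz, hHA, hαpos]
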